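/- For every independent set I in the circulant graph C(17, {1,4}) and every set P of 5 cyclically consecutive residues modulo 17, the intersection I ∩ P has at most 2 elements. -/
import Mathlib

lemma key : ∀ x y z : ZMod 17,
    x ∈ ({0, 1, 2, 3, 4} : Finset (ZMod 17)) →
    y ∈ ({0, 1, 2, 3, 4} : Finset (ZMod 17)) →
    z ∈ ({0, 1, 2, 3, 4} : Finset (ZMod 17)) →
    x ≠ y → x ≠ z → y ≠ z →
    (x - y = 1 ∨ x - y = -1 ∨ x - y = 4 ∨ x - y = -4 ∨
     x - z = 1 ∨ x - z = -1 ∨ x - z = 4 ∨ x - z = -4 ∨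
     y - z = 1 ∨ y - z = -1 ∨ y - z = 4 ∨ y - z = -4) := by decide

/-- Every independent set in the circulant graph `C(17, {1,4})` meets every interval of
5 cyclically consecutive residues in at most 2 elements. -/
theorem circulant_indep_interval :
    ∀ I : Finset (ZMod 17),
      (∀ i ∈ I, ∀ j ∈ I, i - j ≠ 1 ∧ i - j ≠ -1 ∧ i - j ≠ 4 ∧ i - j ≠ -4) →
      ∀ t : ZMod 17,
        (I ∩ ({t, t + 1, t + 2, t + 3, t + 4} : Finset (ZMod 17))).card ≤ 2 := by
  intro I hI t
  by_contra h
  push_neg at h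
  rw [Finset.two_lt_card_iff] at h
  obtain ⟨a, b, c, ha, hb, hc, hab, hac, hbc⟩ := h
  simp only [Finset.mem_inter, Finset.mem_insert, Finset.mem_singleton] at ha hb hc
  obtain ⟨haI, ha⟩ := ha
  obtain ⟨hbI, hb⟩ := hb
  obtain ⟨hcI, hc⟩ := hc
  have hmem : ∀ x : ZMod 17, (x = t ∨ x = t + 1 ∨ x = t + 2 ∨ x = t + 3 ∨ x = t + 4) →
      x - t ∈ ({0, 1, 2, 3, 4} : Finset (ZMod 17)) := by
    intro x hx
    simp only [Finset.mem_insert, Finset.mem_singleton]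
    rcases hx with rfl | rfl | rfl | rfl | rfl
    · exact Or.inl (sub_self _)
    · exact Or.inr (Or.inl (by ring))
    · exact Or.inr (Or.inr (Or.inl (by ring)))
    · exact Or.inr (Or.inr (Or.inr (Or.inl (by ring))))
    · exact Or.inr (Or.inr (Or.inr (Or.inr (by ring))))
  have hk := key (a - t) (b - t) (c - t) (hmem a ha) (hmem b hb) (hmem c hc)
    (by intro h'; exact hab (by linear_combination h')) 
    (by intro h'; exact hac (by linear_combination h'))
    (by intro h'; exact hbc (by linear_combination h'))
  have e1 : a - t - (b - t) = a - b := by ring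
  have e2 : a - t - (c - t) = a - c := by ring
  have e3 : b - t - (c - t) = b - c := by ring
  rw [e1, e2, e3] at hk
  have h1 := hI a haI b hbI
  have h2 := hI a haI c hcI
  have h3 := hI b hbI c hcI
  obtain ⟨p1, p2, p3, p4⟩ := h1
  obtain ⟨q1, q2, q3, q4⟩ := h2
  obtain ⟨r1, r2, r3, r4⟩ := h3
  rcases hk with h | h | h | h | h | h | h | h | h | h | h | h
  exacts [p1 h, p2 h, p3 h, p4 h, q1 h, q2 h, q3 h, q4 h, r1 h, r2 h, r3 h, r4 h]
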